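/- If f: F_2^n → {0,1} is ε-far from odd-cycle-free, then the Cayley graph G(f) on vertex set F_2^n (with x ~ y iff f(x+y)=1) is ε/2-far from bipartite, i.e., every bipartition of F_2^n leaves at least (1/2)ε·4^n edges inside the parts. -/

import Mathlib

open Finset
open scoped Classical

abbrev V (n : ℕ) : Type := Fin n → ZMod 2

def dotp {n : ℕ} (α x : V n) : ZMod 2 := ∑ i, α i * x i

def IsBool {n : ℕ} (f : V n → ℝ) : Prop := ∀ x, f x = 0 ∨ f x = 1

/-- `f` is odd-cycle-free: no odd `k` and `x_1,…,x_k` in the support summing to `0`. -/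
def OCF {n : ℕ} (f : V n → ℝ) : Prop :=
  ∀ k : ℕ, Odd k → ¬ ∃ x : Fin k → V n, (∀ i, f (x i) = 1) ∧ (∑ i, x i) = 0

noncomputable def fhat {n : ℕ} (f : V n → ℝ) (α : V n) : ℝ :=
  (∑ x : V n, f x * (-1 : ℝ) ^ (dotp α x).val) / 2 ^ n

/-- `f` is `ε`-far from odd-cycle-free: every Boolean OCF function differs from `f`
on at least `ε·2^n` points. -/
def FarFromOCF {n : ℕ} (ε : ℝ) (f : V n → ℝ) : Prop :=
  ∀ g : V n → ℝ, IsBool g → OCF g →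
    ε * 2 ^ n ≤ ((Finset.univ.filter fun x => f x ≠ g x).card : ℝ)

noncomputable def mychi {n : ℕ} (α x : V n) : ℝ := (-1) ^ (dotp α x).val

lemma zmod_pow_add (a b : ZMod 2) : ((-1:ℝ)) ^ (a+b).val = (-1)^a.val * (-1)^b.val := by
  have h2 : ZMod.val (2:ZMod 2) = 0 := by decide
  have h1 : ZMod.val (1:ZMod 2) = 1 := by decide
  have h0 : ZMod.val (0:ZMod 2) = 0 := by decide
  have hc : ∀ c : ZMod 2, c = 0 ∨ c = 1 := by decide
  rcases hc a with rfl | rfl <;> rcases hc b with rfl | rfl <;> norm_num [h0,h1,h2]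

lemma dotp_add_right {n : ℕ} (α x y : V n) : dotp α (x+y) = dotp α x + dotp α y := by
  simp [dotp, mul_add, Finset.sum_add_distrib]

lemma dotp_zero_right {n : ℕ} (α : V n) : dotp α 0 = 0 := by simp [dotp]

lemma dotp_comm {n : ℕ} (α x : V n) : dotp α x = dotp x α := by
  simp [dotp, mul_comm]

lemma dotp_sum_right {n : ℕ} (α : V n) (k : ℕ) (x : Fin k → V n) :
    dotp α (∑ i, x i) = ∑ i, dotp α (x i) := by
  simp only [dotp, Finset.sum_apply, Finset.mul_sum]
  exact Finset.sum_comm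

lemma mychi_add_right {n : ℕ} (α x y : V n) : mychi α (x+y) = mychi α x * mychi α y := by
  rw [mychi, dotp_add_right, zmod_pow_add]; rfl

lemma mychi_add_left {n : ℕ} (α β x : V n) : mychi (α+β) x = mychi α x * mychi β x := by
  rw [mychi, dotp_comm, dotp_add_right, zmod_pow_add, mychi, mychi, dotp_comm β x, dotp_comm α x]

lemma mychi_zero_right {n : ℕ} (α : V n) : mychi α 0 = 1 := by
  simp [mychi, dotp_zero_right]

lemma mychi_zero_left {n : ℕ} (x : V n) : mychi 0 x = 1 := by
  rw [mychi, dotp_comm, dotp_zero_right]; rfl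

lemma vadd_self {n : ℕ} (v : V n) : v + v = 0 := by
  funext i
  have h : ∀ a : ZMod 2, a + a = 0 := by decide
  exact h (v i)

lemma vadd_eq_zero_iff {n : ℕ} (w z : V n) : w + z = 0 ↔ z = w := by
  constructor
  · intro h
    have h2 : w + (w + z) = w := by rw [h, add_zero]
    rwa [← add_assoc, vadd_self, zero_add] at h2
  · rintro rfl; exact vadd_self _

lemma sum_mychi {n : ℕ} (z : V n) :
    ∑ α : V n, mychi α z = if z = 0 then (2:ℝ)^n else 0 := by
  by_cases hz : z = 0
  · simp [hz, mychi_zero_right, Finset.card_univ, Fintype.card_fun]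
  · simp only [hz, if_false]
    obtain ⟨i, hi⟩ : ∃ i, z i ≠ 0 := by
      by_contra h; push_neg at h; exact hz (funext h)
    have hone : ∀ a : ZMod 2, a ≠ 0 → a = 1 := by decide
    have hzi : z i = 1 := hone _ hi
    set e : V n := Pi.single i 1 with he
    have hes : mychi e z = -1 := by
      have hd : dotp e z = 1 := by
        rw [dotp, Finset.sum_eq_single i]
        · simp [he, hzi]
        · intro j _ hj
          simp [he, Pi.single_eq_of_ne hj]
        · intro h; exact absurd (Finset.mem_univ i) h
      rw [mychi, hd]
      norm_num [show ZMod.val (1:ZMod 2) = 1 by decide]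
    have hinv : Function.Involutive (· + e) := fun α => by
      show α + e + e = α
      rw [add_assoc, vadd_self, add_zero]
    have hb : ∑ α : V n, mychi (α + e) z = ∑ α : V n, mychi α z :=
      Fintype.sum_bijective (· + e) hinv.bijective _ _ (fun α => rfl)
    have hneg : ∑ α : V n, mychi (α + e) z = - ∑ α : V n, mychi α z := by
      simp [mychi_add_left, hes, Finset.sum_neg_distrib]
    linarith [hb, hneg]

lemma sum_mychi_left {n : ℕ} (α : V n) :
    ∑ x : V n, mychi α x = if α = 0 then (2:ℝ)^n else 0 := by
  have : ∀ x : V n, mychi α x = mychi x α := fun x => by rw [mychi, mychi, dotp_comm]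
  simp only [this]
  exact sum_mychi α

lemma key_id {n : ℕ} (f : V n → ℝ) (A : Finset (V n)) :
    ∑ α : V n, (∑ x : V n, f x * mychi α x) * (∑ x ∈ A, mychi α x)^2
      = 2^n * ∑ x ∈ A, ∑ y ∈ A, f (x+y) := by
  have h1 : ∀ α : V n, (∑ x : V n, f x * mychi α x) * (∑ x ∈ A, mychi α x)^2
      = ∑ x ∈ A, ∑ y ∈ A, ∑ z : V n, f z * mychi α (x + y + z) := by
    intro α
    rw [sq, Finset.sum_mul_sum, Finset.mul_sum]
    refine Finset.sum_congr rfl fun x _ => ?_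
    rw [Finset.mul_sum]
    refine Finset.sum_congr rfl fun y _ => ?_
    rw [Finset.sum_mul]
    refine Finset.sum_congr rfl fun z _ => ?_
    rw [mychi_add_right, mychi_add_right]
    ring
  calc ∑ α : V n, (∑ x : V n, f x * mychi α x) * (∑ x ∈ A, mychi α x)^2
      = ∑ α : V n, ∑ x ∈ A, ∑ y ∈ A, ∑ z : V n, f z * mychi α (x + y + z) :=
        Finset.sum_congr rfl fun α _ => h1 α
    _ = ∑ x ∈ A, ∑ α : V n, ∑ y ∈ A, ∑ z : V n, f z * mychi α (x + y + z) := Finset.sum_comm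
    _ = ∑ x ∈ A, ∑ y ∈ A, ∑ α : V n, ∑ z : V n, f z * mychi α (x + y + z) :=
        Finset.sum_congr rfl fun x _ => Finset.sum_comm
    _ = ∑ x ∈ A, ∑ y ∈ A, ∑ z : V n, ∑ α : V n, f z * mychi α (x + y + z) :=
        Finset.sum_congr rfl fun x _ => Finset.sum_congr rfl fun y _ => Finset.sum_comm
    _ = ∑ x ∈ A, ∑ y ∈ A, ∑ z : V n, f z * (if x+y+z = 0 then (2:ℝ)^n else 0) := by
        refine Finset.sum_congr rfl fun x _ => Finset.sum_congr rfl fun y _ =>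
          Finset.sum_congr rfl fun z _ => ?_
        rw [← Finset.mul_sum, sum_mychi (x+y+z)]
    _ = ∑ x ∈ A, ∑ y ∈ A, (2:ℝ)^n * f (x+y) := by
        refine Finset.sum_congr rfl fun x _ => Finset.sum_congr rfl fun y _ => ?_
        have hco : ∀ z : V n, (x+y+z = 0) = (z = x+y) :=
          fun z => propext (vadd_eq_zero_iff (x+y) z)
        simp only [hco, mul_ite, mul_zero]
        rw [Finset.sum_ite_eq' Finset.univ (x+y) (fun z => f z * (2:ℝ)^n)]
        simp [mul_comm]
    _ = 2^n * ∑ x ∈ A, ∑ y ∈ A, f (x+y) := by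
        rw [Finset.mul_sum]
        exact Finset.sum_congr rfl fun x _ => by rw [Finset.mul_sum]

lemma parseval {n : ℕ} (A : Finset (V n)) :
    ∑ α : V n, (∑ x ∈ A, mychi α x)^2 = 2^n * A.card := by
  have h1 : ∀ α : V n, (∑ x ∈ A, mychi α x)^2 = ∑ x ∈ A, ∑ y ∈ A, mychi α (x+y) := by
    intro α
    rw [sq, Finset.sum_mul_sum]
    exact Finset.sum_congr rfl fun x _ => Finset.sum_congr rfl fun y _ =>
      (mychi_add_right α x y).symm
  calc ∑ α : V n, (∑ x ∈ A, mychi α x)^2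
      = ∑ α : V n, ∑ x ∈ A, ∑ y ∈ A, mychi α (x+y) := Finset.sum_congr rfl fun α _ => h1 α
    _ = ∑ x ∈ A, ∑ α : V n, ∑ y ∈ A, mychi α (x+y) := Finset.sum_comm
    _ = ∑ x ∈ A, ∑ y ∈ A, ∑ α : V n, mychi α (x+y) :=
        Finset.sum_congr rfl fun x _ => Finset.sum_comm
    _ = ∑ x ∈ A, ∑ y ∈ A, (if y = x then (2:ℝ)^n else 0) := by
        refine Finset.sum_congr rfl fun x _ => Finset.sum_congr rfl fun y _ => ?_
        rw [sum_mychi (x+y)]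
        congr 1
        exact propext (vadd_eq_zero_iff x y)
    _ = ∑ x ∈ A, (2:ℝ)^n := by
        refine Finset.sum_congr rfl fun x hx => ?_
        rw [Finset.sum_ite_eq' A x (fun _ => (2:ℝ)^n)]
        simp [hx]
    _ = 2^n * A.card := by rw [Finset.sum_const, nsmul_eq_mul]; ring

lemma one_add_chi (a : ZMod 2) : (1:ℝ) + (-1)^a.val = if a = 0 then 2 else 0 := by
  have h1 : ZMod.val (1:ZMod 2) = 1 := by decide
  have h0 : ZMod.val (0:ZMod 2) = 0 := by decide
  have hc : ∀ c : ZMod 2, c = 0 ∨ c = 1 := by decide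
  rcases hc a with rfl | rfl <;> norm_num [h0, h1]

set_option maxHeartbeats 1600000 in
theorem stmt11 {n : ℕ} (f : V n → ℝ) (hf : IsBool f) (ε : ℝ)
    (hfar : FarFromOCF ε f) (A : Finset (V n)) :
    (1 / 2) * ε * 4 ^ n ≤
      (∑ x ∈ A, ∑ y ∈ A, f (x + y)) / 2 + (∑ x ∈ Aᶜ, ∑ y ∈ Aᶜ, f (x + y)) / 2 := by
  classical
  set N : ℝ := (2:ℝ)^n with hN
  have hNpos : (0:ℝ) < N := by positivity
  set S : V n → ℝ := fun α => ∑ x : V n, f x * mychi α x with hS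
  set TA : V n → ℝ := fun α => ∑ x ∈ A, mychi α x with hTA
  set TB : V n → ℝ := fun α => ∑ x ∈ Aᶜ, mychi α x with hTB
  set IA : ℝ := ∑ x ∈ A, ∑ y ∈ A, f (x + y) with hIAdef
  set IB : ℝ := ∑ x ∈ Aᶜ, ∑ y ∈ Aᶜ, f (x + y) with hIBdef
  set a : ℝ := (A.card : ℝ) with hadef
  set b : ℝ := (Aᶜ.card : ℝ) with hbdef
  have ha : (0:ℝ) ≤ a := by positivity
  have hb : (0:ℝ) ≤ b := by positivity
  have hcard : a + b = N := by
    have h := Finset.card_add_card_compl A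
    have h2 : Fintype.card (V n) = 2^n := by simp [Fintype.card_fun]
    rw [h2] at h
    rw [hadef, hbdef, hN]
    exact_mod_cast congrArg (fun m : ℕ => (m : ℝ)) h
  -- bound from g = 0
  have hbool0 : IsBool (fun _ : V n => (0:ℝ)) := fun _ => Or.inl rfl
  have hOCF0 : OCF (fun _ : V n => (0:ℝ)) := by
    intro k hk h
    obtain ⟨x, hx, -⟩ := h
    exact absurd (hx ⟨0, hk.pos⟩) (by norm_num)
  have hS0 : ε * N ≤ S 0 := by
    have h := hfar _ hbool0 hOCF0
    have hSeq : S 0 = ∑ x : V n, f x := by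
      simp [hS, mychi_zero_left]
    have hfil : ((Finset.univ.filter fun x => f x ≠ (fun _ : V n => (0:ℝ)) x).card : ℝ)
        = ∑ x : V n, f x := by
      have h1 : ∑ x : V n, f x
          = ∑ x ∈ Finset.univ.filter (fun x => f x ≠ 0), f x :=
        (Finset.sum_filter_ne_zero _).symm
      rw [h1]
      rw [Finset.card_eq_sum_ones]
      push_cast
      refine (Finset.sum_congr rfl fun x hx => ?_).symm
      rw [Finset.mem_filter] at hx
      exact (hf x).resolve_left hx.2
    rw [hfil, ← hSeq] at h
    exact h
  -- bound from g = restriction to dotp = 1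
  have hSa : ∀ α : V n, α ≠ 0 → 2 * (ε * N) ≤ S 0 + S α := by
    intro α hα
    set g : V n → ℝ := fun x => if dotp α x = 1 then f x else 0 with hg
    have hboolg : IsBool g := by
      intro x
      by_cases hd : dotp α x = 1
      · simpa [hg, hd] using hf x
      · simp [hg, hd]
    have hOCFg : OCF g := by
      intro k hk h
      obtain ⟨x, hx, hsum⟩ := h
      have hd1 : ∀ i, dotp α (x i) = 1 := by
        intro i
        by_contra hd
        have h0 : g (x i) = 0 := by simp [hg, hd]
        rw [hx i] at h0
        norm_num at h0
      have h0 : dotp α (∑ i, x i) = 0 := by rw [hsum, dotp_zero_right]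
      rw [dotp_sum_right] at h0
      have hks : ∑ i : Fin k, dotp α (x i) = (k : ZMod 2) := by
        simp [hd1]
      rw [hks] at h0
      have hk1 : (k : ZMod 2) = 1 := by
        obtain ⟨m, rfl⟩ := hk
        push_cast
        simp [show ((2:ZMod 2)) = 0 by decide]
      rw [hk1] at h0
      exact one_ne_zero h0
    have h := hfar g hboolg hOCFg
    have hsplit : S 0 + S α
        = 2 * ∑ x ∈ Finset.univ.filter (fun x => dotp α x = 0), f x := by
      have h1 : S 0 + S α = ∑ x : V n, (if dotp α x = 0 then 2 * f x else 0) := by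
        simp only [hS]
        rw [← Finset.sum_add_distrib]
        refine Finset.sum_congr rfl fun x _ => ?_
        have h2 : f x * mychi 0 x + f x * mychi α x = f x * (1 + (-1)^(dotp α x).val) := by
          rw [mychi_zero_left, mychi]; ring
        rw [h2, one_add_chi]
        by_cases hd : dotp α x = 0 <;> simp [hd] <;> ring
      rw [h1, Finset.sum_filter, Finset.mul_sum]
      refine Finset.sum_congr rfl fun x _ => ?_
      by_cases hd : dotp α x = 0 <;> simp [hd]
    have hfil : ((Finset.univ.filter fun x => f x ≠ g x).card : ℝ)
        = ∑ x ∈ Finset.univ.filter (fun x => dotp α x = 0), f x := by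
      have hpred : Finset.univ.filter (fun x => f x ≠ g x)
          = Finset.univ.filter (fun x => dotp α x = 0 ∧ f x ≠ 0) := by
        refine Finset.filter_congr fun x _ => ?_
        by_cases hd : dotp α x = 1
        · have hd0 : dotp α x ≠ 0 := by rw [hd]; decide
          simp [hg, hd, hd0]
        · have hd0 : dotp α x = 0 := by
            have : ∀ c : ZMod 2, c ≠ 1 → c = 0 := by decide
            exact this _ hd
          simp [hg, hd0, show ¬((0:ZMod 2) = 1) by decide]
      rw [hpred]
      have h1 : ∑ x ∈ Finset.univ.filter (fun x => dotp α x = 0), f x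
          = ∑ x ∈ (Finset.univ.filter (fun x => dotp α x = 0)).filter (fun x => f x ≠ 0), f x :=
        (Finset.sum_filter_ne_zero _).symm
      rw [h1, Finset.filter_filter]
      rw [Finset.card_eq_sum_ones]
      push_cast
      refine (Finset.sum_congr rfl fun x hx => ?_)
      rw [Finset.mem_filter] at hx
      exact ((hf x).resolve_left hx.2.2).symm
    rw [hfil] at h
    linarith
  -- main identities
  have hIA : ∑ α : V n, S α * (TA α)^2 = N * IA := by
    simp only [hS, hTA, hIAdef, hN]
    exact key_id f A
  have hIB : ∑ α : V n, S α * (TB α)^2 = N * IB := by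
    simp only [hS, hTB, hIBdef, hN]
    exact key_id f Aᶜ
  have hPA : ∑ α : V n, (TA α)^2 = N * a := by
    simp only [hTA, hN, hadef]
    exact parseval A
  have hTA0 : TA 0 = a := by simp [hTA, mychi_zero_left, hadef]
  have hTB0 : TB 0 = b := by simp [hTB, mychi_zero_left, hbdef]
  have hTBneg : ∀ α : V n, α ≠ 0 → TB α = - TA α := by
    intro α hα
    have h := Finset.sum_add_sum_compl A (fun x => mychi α x)
    rw [sum_mychi_left α, if_neg hα] at h
    simp only [hTA, hTB]
    linarith
  clear_value a b IA IB TA TB S N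
  -- split off α = 0
  have hsplitsum : ∀ F : V n → ℝ,
      ∑ α : V n, F α = F 0 + ∑ α ∈ Finset.univ.erase 0, F α :=
    fun F => (Finset.add_sum_erase _ F (Finset.mem_univ 0)).symm
  have hEr : ∑ α ∈ Finset.univ.erase 0, (TA α)^2 = N * a - a^2 := by
    have := hsplitsum (fun α => (TA α)^2)
    rw [hPA, hTA0] at this
    simp only [sq] at this ⊢
    linarith
  have hstep : (2 * (ε * N) - S 0) * (2 * (N * a - a^2))
      ≤ ∑ α ∈ Finset.univ.erase 0, S α * ((TA α)^2 + (TB α)^2) := by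
    have hlow : ∀ α ∈ Finset.univ.erase 0,
        (2 * (ε * N) - S 0) * ((TA α)^2 + (TB α)^2)
          ≤ S α * ((TA α)^2 + (TB α)^2) := by
      intro α hαm
      have hα : α ≠ 0 := (Finset.mem_erase.mp hαm).1
      have hnn : (0:ℝ) ≤ (TA α)^2 + (TB α)^2 := by positivity
      have := hSa α hα
      nlinarith
    have hEr2 : ∑ α ∈ Finset.univ.erase 0, ((TA α)^2 + (TB α)^2) = 2 * (N * a - a^2) := by
      rw [← hEr, Finset.mul_sum]
      refine Finset.sum_congr rfl fun α hαm => ?_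
      have hα : α ≠ 0 := (Finset.mem_erase.mp hαm).1
      rw [hTBneg α hα, neg_sq]
      ring
    calc (2 * (ε * N) - S 0) * (2 * (N * a - a^2))
        = (2 * (ε * N) - S 0) * ∑ α ∈ Finset.univ.erase 0, ((TA α)^2 + (TB α)^2) := by
          rw [hEr2]
      _ = ∑ α ∈ Finset.univ.erase 0, (2 * (ε * N) - S 0) * ((TA α)^2 + (TB α)^2) :=
          Finset.mul_sum _ _ _
      _ ≤ _ := Finset.sum_le_sum hlow
  have htotal : N * (IA + IB)
      = S 0 * (a^2 + b^2) + ∑ α ∈ Finset.univ.erase 0, S α * ((TA α)^2 + (TB α)^2) := by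
    have h1 : ∑ α : V n, S α * ((TA α)^2 + (TB α)^2) = N * (IA + IB) := by
      rw [mul_add, ← hIA, ← hIB, ← Finset.sum_add_distrib]
      exact Finset.sum_congr rfl fun α _ => by ring
    rw [← h1, hsplitsum (fun α => S α * ((TA α)^2 + (TB α)^2)), hTA0, hTB0]
  have h4 : (4:ℝ)^n = N * N := by
    rw [hN, ← mul_pow]; norm_num
  rw [h4]
  have hfinal : ε * N * N ≤ IA + IB := by
    have hkey : N * (IA + IB) ≥ S 0 * (a^2 + b^2) + (2 * (ε * N) - S 0) * (2 * (N * a - a^2)) := by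
      rw [htotal]; linarith [hstep]
    have hb2 : b = N - a := by linarith
    have hsq : (0:ℝ) ≤ (a - b)^2 := sq_nonneg _
    have hprod : (0:ℝ) ≤ (S 0 - ε * N) * (a - b)^2 :=
      mul_nonneg (by linarith) hsq
    have hab : (0:ℝ) ≤ a * b := mul_nonneg ha hb
    have hNab : N * a - a^2 = a * b := by rw [hb2]; ring
    rw [hNab] at hkey
    have hchain : N * (IA + IB) ≥ ε * N * (a + b)^2 := by nlinarith [hkey, hprod]
    rw [hcard] at hchain
    nlinarith [hchain, hNpos, mul_pos hNpos hNpos]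
  linarith
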